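/- For every real number m ≥ 0 and every integer p ≥ 1, the equation m·sin(2k) + k·cos(2k) = 0 has exactly one solution k in the interval [(2p−1)π/4, pπ/2]. -/

import Mathlib

open Real

/-- For every `m ≥ 0` and every integer `p ≥ 1`, the equation
`m·sin(2k) + k·cos(2k) = 0` has exactly one solution `k` in the interval
`[(2p−1)π/4, pπ/2]`. -/
theorem unique_transverse_root (m : ℝ) (hm : 0 ≤ m) (p : ℕ) (hp : 1 ≤ p) :
    ∃! k : ℝ, k ∈ Set.Icc ((2 * (p : ℝ) - 1) * π / 4) ((p : ℝ) * π / 2) ∧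
      m * Real.sin (2 * k) + k * Real.cos (2 * k) = 0 := by
  have hπ := Real.pi_pos
  have hp1 : (1:ℝ) ≤ (p:ℝ) := by exact_mod_cast hp
  set a : ℝ := (2 * (p : ℝ) - 1) * π / 4 with ha
  set b : ℝ := (p : ℝ) * π / 2 with hb
  have hab : a < b := by rw [ha, hb]; nlinarith
  have ha0 : 0 < a := by rw [ha]; nlinarith
  set s : ℝ := (-1:ℝ)^p with hs
  have hs2 : s * s = 1 := by
    rw [hs, ← pow_add]
    simp [pow_mul]
  have hsne : s ≠ 0 := by rw [hs]; exact pow_ne_zero _ (by norm_num)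
  set g : ℝ → ℝ := fun k => s * (m * Real.sin (2*k) + k * Real.cos (2*k)) with hg
  have hderiv : ∀ x : ℝ,
      HasDerivAt g (s * ((2*m+1) * Real.cos (2*x) - 2*x * Real.sin (2*x))) x := by
    intro x
    have h2x : HasDerivAt (fun x : ℝ => 2*x) 2 x := by
      simpa using (hasDerivAt_id x).const_mul 2
    have hsin : HasDerivAt (fun x : ℝ => Real.sin (2*x)) (Real.cos (2*x) * 2) x :=
      (Real.hasDerivAt_sin (2*x)).comp x h2x
    have hcos : HasDerivAt (fun x : ℝ => Real.cos (2*x)) (-Real.sin (2*x) * 2) x :=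
      (Real.hasDerivAt_cos (2*x)).comp x h2x
    have h1 : HasDerivAt (fun x : ℝ => m * Real.sin (2*x)) (m * (Real.cos (2*x) * 2)) x :=
      hsin.const_mul m
    have h2 : HasDerivAt (fun x : ℝ => x * Real.cos (2*x))
        (1 * Real.cos (2*x) + x * (-Real.sin (2*x) * 2)) x :=
      (hasDerivAt_id x).mul hcos
    have h3 := (h1.add h2).const_mul s
    refine h3.congr_deriv ?_
    ring
  have gcont : ContinuousOn g (Set.Icc a b) :=
    fun x _ => ((hderiv x).differentiableAt.continuousAt).continuousWithinAt
  have hpos : ∀ x ∈ Set.Ioo a b, 0 < deriv g x := by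
    intro x hx
    rw [(hderiv x).deriv]
    have hx1 : a < x := hx.1
    have hx2 : x < b := hx.2
    set t : ℝ := (p:ℝ)*π - 2*x with ht
    have ht0 : 0 < t := by rw [ht]; rw [hb] at hx2; nlinarith
    have ht2 : t < π/2 := by rw [ht]; rw [ha] at hx1; nlinarith
    have h2x : 2*x = (p:ℝ)*π - t := by rw [ht]; ring
    have hcos : Real.cos (2*x) = s * Real.cos t := by
      rw [h2x, Real.cos_nat_mul_pi_sub, hs]
    have hsin : Real.sin (2*x) = -(s * Real.sin t) := by
      rw [h2x, Real.sin_nat_mul_pi_sub, hs]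
    have hct : 0 < Real.cos t := Real.cos_pos_of_mem_Ioo ⟨by linarith, ht2⟩
    have hst : 0 < Real.sin t := Real.sin_pos_of_pos_of_lt_pi ht0 (by linarith)
    have hx0 : 0 < x := lt_trans ha0 hx1
    rw [hcos, hsin]
    have key : s * ((2*m+1) * (s * Real.cos t) - 2*x * -(s * Real.sin t))
        = (s*s) * ((2*m+1) * Real.cos t + 2*x * Real.sin t) := by ring
    rw [key, hs2, one_mul]
    nlinarith
  have hmono : StrictMonoOn g (Set.Icc a b) := by
    apply strictMonoOn_of_deriv_pos (convex_Icc a b) gcont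
    intro x hx
    exact hpos x (by rwa [interior_Icc] at hx)
  have h2a : 2*a = (p:ℝ)*π - π/2 := by rw [ha]; ring
  have h2b : 2*b = (p:ℝ)*π := by rw [hb]; ring
  have hga : g a = -m := by
    rw [hg]
    simp only
    rw [h2a, Real.sin_nat_mul_pi_sub, Real.cos_nat_mul_pi_sub,
      Real.sin_pi_div_two, Real.cos_pi_div_two, ← hs]
    linear_combination (-m) * hs2
  have hgb : g b = b := by
    rw [hg]
    simp only
    rw [h2b, show (p:ℝ)*π = (p:ℝ)*π - 0 by ring, Real.sin_nat_mul_pi_sub,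
      Real.cos_nat_mul_pi_sub, Real.sin_zero, Real.cos_zero, ← hs]
    linear_combination b * hs2
  have hb0 : 0 < b := lt_trans ha0 hab
  have h0mem : (0:ℝ) ∈ Set.Icc (g a) (g b) := by
    rw [hga, hgb]; constructor <;> linarith
  obtain ⟨c, hc, hgc⟩ := intermediate_value_Icc (le_of_lt hab) gcont h0mem
  have hfc : m * Real.sin (2 * c) + c * Real.cos (2 * c) = 0 := by
    have : s * (m * Real.sin (2*c) + c * Real.cos (2*c)) = 0 := hgc
    exact (mul_eq_zero.mp this).resolve_left hsne
  refine ⟨c, ⟨hc, hfc⟩, ?_⟩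
  rintro y ⟨hy, hfy⟩
  apply hmono.injOn hy hc
  rw [hg]
  simp only
  rw [hfy, mul_zero]
  exact hgc.symm
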